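/- Let K be a Markov kernel on a metric space E (acting on measures by μK(A) = ∫ K(x,A) dμ(x)). Then the Wasserstein contraction coefficient sup_{μ≠ν} W₁(μK, νK)/W₁(μ,ν) over probability measures with finite first moments equals sup_{x≠y} W₁(K(x,·), K(y,·))/d(x,y). -/

import Mathlib

open MeasureTheory
open scoped ENNReal NNReal ProbabilityTheory

/-- 1-Wasserstein distance via Kantorovich duality. -/
noncomputable def W1 {α : Type*} [MetricSpace α] [MeasurableSpace α]
    (μ ν : Measure α) : ℝ≥0∞ :=
  ⨆ g : {f : α → ℝ // LipschitzWith 1 f},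
    ENNReal.ofReal |(∫ x, g.val x ∂μ) - ∫ x, g.val x ∂ν|

section Aux

variable {α : Type*} [MetricSpace α] [MeasurableSpace α] [BorelSpace α]

lemma W1_self (μ : Measure α) : W1 μ μ = 0 :=
  le_antisymm (iSup_le fun _ => by simp) (zero_le)

lemma integrable_of_lip {μ : Measure α} [IsProbabilityMeasure μ]
    (hμ : ∀ x₀ : α, Integrable (fun x => dist x x₀) μ) {c : ℝ≥0} {g : α → ℝ}
    (hg : LipschitzWith c g) (x₀ : α) : Integrable g μ := by
  refine ((integrable_const |g x₀|).add ((hμ x₀).const_mul (c : ℝ))).mono'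
    hg.continuous.aestronglyMeasurable ?_
  filter_upwards with x
  have h := hg.dist_le_mul x x₀
  rw [Real.dist_eq] at h
  have h2 : |g x| ≤ |g x₀| + |g x - g x₀| := by
    calc |g x| = |g x₀ + (g x - g x₀)| := by ring_nf
    _ ≤ |g x₀| + |g x - g x₀| := abs_add_le _ _
  show ‖g x‖ ≤ |g x₀| + ↑c * dist x x₀
  have h3 : ‖g x‖ = |g x| := rfl
  rw [h3]
  linarith

lemma W1_dirac (x y : α) : W1 (Measure.dirac x) (Measure.dirac y) = edist x y := by
  refine le_antisymm (iSup_le fun g => ?_) ?_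
  · rw [integral_dirac, integral_dirac, edist_dist]
    refine ENNReal.ofReal_le_ofReal ?_
    have h := g.2.dist_le_mul x y
    rw [Real.dist_eq] at h
    simpa using h
  · have h := le_iSup (fun g : {f : α → ℝ // LipschitzWith 1 f} =>
      ENNReal.ofReal |(∫ z, g.val z ∂Measure.dirac x) - ∫ z, g.val z ∂Measure.dirac y|)
      ⟨fun z => dist z y, LipschitzWith.dist_left y⟩
    rw [show W1 (Measure.dirac x) (Measure.dirac y) = ⨆ g : {f : α → ℝ // LipschitzWith 1 f},
      ENNReal.ofReal |(∫ z, g.val z ∂Measure.dirac x) - ∫ z, g.val z ∂Measure.dirac y| from rfl]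
    simpa [integral_dirac, edist_dist, abs_of_nonneg dist_nonneg] using h

end Aux

/-- For a Markov kernel `K` (whose values have finite first moments),
the Wasserstein contraction coefficient over probability measures with finite first
moments, `sup_{μ≠ν} W₁(μK,νK)/W₁(μ,ν)`, equals `sup_{x≠y} W₁(K(x,·),K(y,·))/d(x,y)`. -/
theorem stmt7 {α : Type*} [MetricSpace α] [MeasurableSpace α] [BorelSpace α]
    (K : ProbabilityTheory.Kernel α α) [ProbabilityTheory.IsMarkovKernel K]
    (hK : ∀ x x₀, Integrable (fun y => dist y x₀) (K x)) :
    (⨆ q : {p : Measure α × Measure α //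
        (IsProbabilityMeasure p.1 ∧ ∀ x₀, Integrable (fun x => dist x x₀) p.1) ∧
        (IsProbabilityMeasure p.2 ∧ ∀ x₀, Integrable (fun x => dist x x₀) p.2) ∧
        p.1 ≠ p.2},
      W1 (q.val.1.bind fun x => K x) (q.val.2.bind fun x => K x) / W1 q.val.1 q.val.2) =
    ⨆ q : {p : α × α // p.1 ≠ p.2},
      W1 (K q.val.1) (K q.val.2) / edist q.val.1 q.val.2 := by
  classical
  rcases isEmpty_or_nonempty α with hemp | hne
  · haveI : IsEmpty {p : α × α // p.1 ≠ p.2} := ⟨fun q => hemp.elim q.1.1⟩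
    haveI : IsEmpty {p : Measure α × Measure α //
        (IsProbabilityMeasure p.1 ∧ ∀ x₀, Integrable (fun x => dist x x₀) p.1) ∧
        (IsProbabilityMeasure p.2 ∧ ∀ x₀, Integrable (fun x => dist x x₀) p.2) ∧
        p.1 ≠ p.2} := by
      refine ⟨fun q => ?_⟩
      have h1 := q.2.1.1.measure_univ
      rw [Set.univ_eq_empty_iff.mpr hemp, measure_empty] at h1
      exact zero_ne_one h1
    rw [iSup_of_empty, iSup_of_empty]
  obtain ⟨x₀⟩ := hne
  set C := ⨆ q : {p : α × α // p.1 ≠ p.2},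
      W1 (K q.val.1) (K q.val.2) / edist q.val.1 q.val.2 with hCdef
  have hdiracint : ∀ z x₁ : α, Integrable (fun w => dist w x₁) (Measure.dirac z) := by
    intro z x₁
    exact (integrable_const (dist z x₁)).congr
      (MeasureTheory.ae_eq_dirac' ((continuous_id.dist continuous_const).measurable)).symm
  refine le_antisymm ?_ ?_
  · -- LHS ≤ C
    by_cases hCtop : C = ⊤
    · rw [hCtop]; exact le_top
    have hCle : ∀ x y : α, W1 (K x) (K y) ≤ C * edist x y := by
      intro x y
      rcases eq_or_ne x y with rfl | hne'
      · simp [W1_self]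
      · have h1 : W1 (K x) (K y) / edist x y ≤ C := by
          rw [hCdef]
          exact le_iSup (fun q : {p : α × α // p.1 ≠ p.2} =>
            W1 (K q.val.1) (K q.val.2) / edist q.val.1 q.val.2) ⟨(x, y), hne'⟩
        rwa [ENNReal.div_le_iff_le_mul (Or.inl (by simp [hne']))
          (Or.inl (edist_ne_top x y))] at h1
    have hTlip : ∀ g : α → ℝ, LipschitzWith 1 g →
        LipschitzWith C.toNNReal (fun x => ∫ y, g y ∂K x) := by
      intro g hg
      refine LipschitzWith.of_dist_le_mul fun x y => ?_
      have h1 : ENNReal.ofReal |(∫ z, g z ∂K x) - ∫ z, g z ∂K y| ≤ W1 (K x) (K y) :=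
        le_iSup (fun g' : {f : α → ℝ // LipschitzWith 1 f} =>
          ENNReal.ofReal |(∫ z, g'.val z ∂K x) - ∫ z, g'.val z ∂K y|) ⟨g, hg⟩
      have h2 := h1.trans (hCle x y)
      rw [edist_dist, ← ENNReal.ofReal_toReal hCtop,
        ← ENNReal.ofReal_mul ENNReal.toReal_nonneg] at h2
      have h3 := (ENNReal.ofReal_le_ofReal_iff
        (mul_nonneg ENNReal.toReal_nonneg dist_nonneg)).mp h2
      have hcoe : ((C.toNNReal : ℝ)) = C.toReal := rfl
      rw [Real.dist_eq, hcoe]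
      exact h3
    refine iSup_le fun q => ?_
    obtain ⟨⟨μ, ν⟩, ⟨hμp, hμm⟩, ⟨hνp, hνm⟩, hμν⟩ := q
    simp only at hμp hμm hνp hνm hμν ⊢
    haveI := hμp; haveI := hνp
    have hswap : ∀ (m : Measure α), IsProbabilityMeasure m →
        (∀ x₁ : α, Integrable (fun x => dist x x₁) m) →
        ∀ g : α → ℝ, LipschitzWith 1 g →
        ∫ z, g z ∂(m.bind fun x => K x) = ∫ x, ∫ y, g y ∂K x ∂m := by
      intro m hm hmi g hg
      haveI := hm
      have hbind : (m.bind fun x => K x) = Measure.map Prod.snd (m ⊗ₘ K) := by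
        ext s hs
        rw [Measure.bind_apply hs K.measurable.aemeasurable, Measure.map_apply measurable_snd hs,
          Measure.compProd_apply (measurable_snd hs)]
        rfl
      have habs : LipschitzWith 1 (fun y => ‖g y‖) := by
        have h := lipschitzWith_one_norm.comp hg
        rw [mul_one] at h
        exact h
      have hint : Integrable (fun p : α × α => g p.2) (m ⊗ₘ K) := by
        rw [Measure.integrable_compProd_iff
          (show AEStronglyMeasurable (fun p : α × α => g p.2) (m ⊗ₘ K) from (hg.continuous.measurable.comp measurable_snd).aestronglyMeasurable)]
        refine ⟨Filter.Eventually.of_forall fun x => integrable_of_lip (hK x) hg x₀, ?_⟩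
        exact integrable_of_lip hmi (hTlip _ habs) x₀
      rw [hbind, integral_map measurable_snd.aemeasurable hg.continuous.aestronglyMeasurable,
        Measure.integral_compProd hint]
    have key : W1 (μ.bind fun x => K x) (ν.bind fun x => K x) ≤ C * W1 μ ν := by
      show (⨆ g : {f : α → ℝ // LipschitzWith 1 f},
        ENNReal.ofReal |(∫ z, g.val z ∂(μ.bind fun x => K x)) -
          ∫ z, g.val z ∂(ν.bind fun x => K x)|) ≤ C * W1 μ ν
      refine iSup_le fun g => ?_
      rw [hswap μ hμp hμm g.1 g.2, hswap ν hνp hνm g.1 g.2]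
      set T := fun x => ∫ y, g.1 y ∂K x with hT
      have hTl : LipschitzWith C.toNNReal T := hTlip g.1 g.2
      rcases eq_or_ne C 0 with hC0 | hC0
      · have hconst : ∀ x, T x = T x₀ := by
          intro x
          have h := hTl.dist_le_mul x x₀
          rw [hC0] at h
          simp only [ENNReal.toNNReal_zero, NNReal.coe_zero, zero_mul] at h
          exact dist_le_zero.mp h
        rw [show T = fun _ => T x₀ from funext hconst, integral_const, integral_const]
        simp
      · have hCR : 0 < C.toReal := ENNReal.toReal_pos hC0 hCtop
        set S := fun x => (C.toReal)⁻¹ * T x with hS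
        have hSl : LipschitzWith 1 S := by
          refine LipschitzWith.of_dist_le_mul fun x y => ?_
          have h := hTl.dist_le_mul x y
          have hcoe : ((C.toNNReal : ℝ)) = C.toReal := rfl
          rw [Real.dist_eq, hcoe] at h
          rw [Real.dist_eq]
          have hd : S x - S y = (C.toReal)⁻¹ * (T x - T y) := by rw [hS]; ring
          rw [hd, abs_mul, abs_of_nonneg (by positivity)]
          calc (C.toReal)⁻¹ * |T x - T y| ≤ (C.toReal)⁻¹ * (C.toReal * dist x y) :=
                mul_le_mul_of_nonneg_left h (by positivity)
            _ = 1 * dist x y := by field_simp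
        have hrt : ENNReal.ofReal |(∫ x, S x ∂μ) - ∫ x, S x ∂ν| ≤ W1 μ ν :=
          le_iSup (fun g' : {f : α → ℝ // LipschitzWith 1 f} =>
            ENNReal.ofReal |(∫ x, g'.val x ∂μ) - ∫ x, g'.val x ∂ν|) ⟨S, hSl⟩
        have hTS : ∀ x, T x = C.toReal * S x := by
          intro x
          rw [hS]
          field_simp
        have h1 : (∫ x, T x ∂μ) = C.toReal * ∫ x, S x ∂μ := by
          rw [← integral_const_mul]
          exact integral_congr_ae (Filter.Eventually.of_forall fun x => hTS x)
        have h2 : (∫ x, T x ∂ν) = C.toReal * ∫ x, S x ∂ν := by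
          rw [← integral_const_mul]
          exact integral_congr_ae (Filter.Eventually.of_forall fun x => hTS x)
        rw [h1, h2, ← mul_sub, abs_mul, abs_of_nonneg hCR.le,
          ENNReal.ofReal_mul hCR.le, ENNReal.ofReal_toReal hCtop]
        exact mul_le_mul_right hrt C
    exact ENNReal.div_le_of_le_mul key
  · -- C ≤ LHS
    rw [hCdef]
    refine iSup_le fun q => ?_
    obtain ⟨⟨x, y⟩, hxy⟩ := q
    have hle := le_iSup (fun q : {p : Measure α × Measure α //
        (IsProbabilityMeasure p.1 ∧ ∀ x₁, Integrable (fun x => dist x x₁) p.1) ∧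
        (IsProbabilityMeasure p.2 ∧ ∀ x₁, Integrable (fun x => dist x x₁) p.2) ∧
        p.1 ≠ p.2} =>
        W1 (q.val.1.bind fun x => K x) (q.val.2.bind fun x => K x) / W1 q.val.1 q.val.2)
      ⟨(Measure.dirac x, Measure.dirac y),
        ⟨Measure.dirac.isProbabilityMeasure, hdiracint x⟩,
        ⟨Measure.dirac.isProbabilityMeasure, hdiracint y⟩,
        MeasureTheory.dirac_ne_dirac hxy⟩
    simp only at hle
    rw [Measure.dirac_bind K.measurable, Measure.dirac_bind K.measurable, W1_dirac] at hle
    exact hle
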